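/- arXiv:1801.02799 — 2 statements merged into one kernel-verified Lean document; each statement's English description precedes it below -/
import Mathlib

section
/- If B < W·β·E/(2·H^α·ln 2), then there exists T > 0 such that (T/2)·W·log₂(1 + β·E/(T·H^α)) = B; conversely, if B ≥ W·β·E/(2·H^α·ln 2), then no T > 0 satisfies (T/2)·W·log₂(1 + β·E/(T·H^α)) ≥ B. -/
lemma sqrt_subadd' {x y : ℝ} (hx : 0 ≤ x) (hy : 0 ≤ y) :
    Real.sqrt (x + y) ≤ Real.sqrt x + Real.sqrt y := by
  nlinarith [Real.sq_sqrt hx, Real.sq_sqrt hy, Real.sq_sqrt (add_nonneg hx hy),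
    Real.sqrt_nonneg x, Real.sqrt_nonneg y, Real.sqrt_nonneg (x+y)]

lemma log_lower' {x : ℝ} (hx : 0 < x) : x / (1 + x) ≤ Real.log (1 + x) := by
  have h1 : (0:ℝ) < 1 + x := by linarith
  have h := Real.log_le_sub_one_of_pos (x := (1+x)⁻¹) (by positivity)
  rw [Real.log_inv] at h
  have : 1 - (1+x)⁻¹ = x / (1+x) := by field_simp; ring
  linarith [h, this]

lemma fbound' (W c T : ℝ) (hW : 0 < W) (hc : 0 < c) (hT : 0 < T) :
    T / 2 * W * Real.logb 2 (1 + c / T) ≤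
      W * (T + Real.sqrt c * Real.sqrt T) / Real.log 2 := by
  have hl2 : 0 < Real.log 2 := Real.log_pos (by norm_num)
  have hx : (0:ℝ) < 1 + c / T := by positivity
  have hlog : Real.log (1 + c / T) ≤ 2 * Real.sqrt (1 + c / T) := by
    have h1 := Real.log_le_sub_one_of_pos (Real.sqrt_pos.mpr hx)
    have h2 : Real.log (Real.sqrt (1 + c/T)) = Real.log (1 + c/T) / 2 :=
      Real.log_sqrt (le_of_lt hx)
    rw [h2] at h1
    linarith
  have hs : Real.sqrt (1 + c / T) ≤ 1 + Real.sqrt c / Real.sqrt T := by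
    calc Real.sqrt (1 + c / T) ≤ Real.sqrt 1 + Real.sqrt (c / T) :=
          sqrt_subadd' zero_le_one (by positivity)
      _ = 1 + Real.sqrt c / Real.sqrt T := by
          rw [Real.sqrt_one, Real.sqrt_div hc.le]
  have hlog2 : Real.log (1 + c / T) ≤ 2 * (1 + Real.sqrt c / Real.sqrt T) := by linarith
  rw [Real.logb]
  have h3 : T / 2 * W * (Real.log (1 + c/T) / Real.log 2) ≤
      T / 2 * W * ((2 * (1 + Real.sqrt c / Real.sqrt T)) / Real.log 2) := by gcongr
  have h4 : T / 2 * W * ((2 * (1 + Real.sqrt c / Real.sqrt T)) / Real.log 2)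
      = W * (T + Real.sqrt c * Real.sqrt T) / Real.log 2 := by
    have hsT : Real.sqrt T ≠ 0 := ne_of_gt (Real.sqrt_pos.mpr hT)
    have hss : Real.sqrt T * Real.sqrt T = T := Real.mul_self_sqrt hT.le
    field_simp
    linear_combination (-Real.sqrt c) * hss
  linarith

lemma aux_hover (W c B : ℝ) (hW : 0 < W) (hc : 0 < c) (hB : 0 < B) :
    (B < W * c / (2 * Real.log 2) →
      ∃ T : ℝ, 0 < T ∧ T / 2 * W * Real.logb 2 (1 + c / T) = B) ∧
    (W * c / (2 * Real.log 2) ≤ B →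
      ∀ T : ℝ, 0 < T → ¬ (B ≤ T / 2 * W * Real.logb 2 (1 + c / T))) := by
  have hl2 : 0 < Real.log 2 := Real.log_pos (by norm_num)
  set L : ℝ := W * c / (2 * Real.log 2) with hL
  have hLpos : 0 < L := by positivity
  have hub : ∀ T : ℝ, 0 < T → T / 2 * W * Real.logb 2 (1 + c / T) < L := by
    intro T hT
    have hcT : 0 < c / T := by positivity
    have h1 : Real.log (1 + c / T) < c / T := by
      have := Real.log_lt_sub_one_of_pos (x := 1 + c/T) (by linarith) (by linarith)
      linarith
    rw [Real.logb]
    have h2 : T/2*W*(Real.log (1+c/T)/Real.log 2) < T/2*W*((c/T)/Real.log 2) := by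
      gcongr
    have h3 : T/2*W*((c/T)/Real.log 2) = L := by
      rw [hL]; field_simp
    linarith
  refine ⟨?_, fun hLB T hT hle => absurd hle (not_le.mpr (lt_of_lt_of_le (hub T hT) hLB))⟩
  intro hBL
  set f : ℝ → ℝ := fun T => T / 2 * W * Real.logb 2 (1 + c / T) with hf
  -- upper point T₂
  set T₂ : ℝ := B * c / (L - B) with hT₂def
  have hLB' : 0 < L - B := by linarith
  have hT₂ : 0 < T₂ := by positivity
  have hfT₂ : B ≤ f T₂ := by
    have hcT : 0 < c / T₂ := by positivity
    have h1 : c / T₂ / (1 + c / T₂) ≤ Real.log (1 + c / T₂) := log_lower' hcT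
    have h2 : T₂/2*W*((c/T₂/(1+c/T₂))/Real.log 2)
        ≤ T₂/2*W*(Real.log (1+c/T₂)/Real.log 2) := by gcongr
    have h3 : c / T₂ / (1 + c / T₂) = c / (T₂ + c) := by
      rw [div_div]
      congr 1
      field_simp
    have hkey : T₂ * (L - B) = B * c := by
      rw [hT₂def]; field_simp
    have hkey2 : T₂ * W * c = 2 * Real.log 2 * B * (T₂ + c) := by
      rw [hL] at hkey
      field_simp at hkey
      linarith
    have h4 : B ≤ T₂/2*W*(c/(T₂+c)/Real.log 2) := by
      have hTc : 0 < T₂ + c := by positivity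
      rw [show T₂/2*W*(c/(T₂+c)/Real.log 2) = T₂*W*c/(2*(T₂+c)*Real.log 2) by
        field_simp]
      rw [le_div_iff₀ (by positivity)]
      nlinarith [hkey2]
    rw [h3] at h2
    show B ≤ T₂ / 2 * W * Real.logb 2 (1 + c / T₂)
    rw [Real.logb]
    linarith
  -- lower point T₁
  set ε : ℝ := B * Real.log 2 / (W * (1 + Real.sqrt c)) with hεdef
  have hsc : 0 ≤ Real.sqrt c := Real.sqrt_nonneg c
  have hε : 0 < ε := by positivity
  set T₁ : ℝ := min T₂ (min 1 (ε^2)) with hT₁def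
  have hT₁ : 0 < T₁ := lt_min hT₂ (lt_min one_pos (by positivity))
  have hT₁le : T₁ ≤ T₂ := min_le_left _ _
  have hT₁1 : T₁ ≤ 1 := le_trans (min_le_right _ _) (min_le_left _ _)
  have hT₁ε : T₁ ≤ ε^2 := le_trans (min_le_right _ _) (min_le_right _ _)
  have hsT₁ : Real.sqrt T₁ ≤ ε := by
    calc Real.sqrt T₁ ≤ Real.sqrt (ε^2) := Real.sqrt_le_sqrt hT₁ε
      _ = ε := Real.sqrt_sq hε.le
  have hT₁s : T₁ ≤ Real.sqrt T₁ := by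
    calc T₁ = Real.sqrt (T₁^2) := (Real.sqrt_sq hT₁.le).symm
      _ ≤ Real.sqrt T₁ := Real.sqrt_le_sqrt (by nlinarith)
  have hfT₁ : f T₁ ≤ B := by
    have h1 := fbound' W c T₁ hW hc hT₁
    have h2 : W * (T₁ + Real.sqrt c * Real.sqrt T₁) / Real.log 2
        ≤ W * ((1 + Real.sqrt c) * ε) / Real.log 2 := by
      gcongr
      calc T₁ + Real.sqrt c * Real.sqrt T₁
          ≤ Real.sqrt T₁ + Real.sqrt c * Real.sqrt T₁ := by linarith
        _ = (1 + Real.sqrt c) * Real.sqrt T₁ := by ring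
        _ ≤ (1 + Real.sqrt c) * ε := by
            apply mul_le_mul_of_nonneg_left hsT₁ (by positivity)
    have h3 : W * ((1 + Real.sqrt c) * ε) / Real.log 2 = B := by
      rw [hεdef]
      field_simp
    calc f T₁ ≤ W * (T₁ + Real.sqrt c * Real.sqrt T₁) / Real.log 2 := h1
      _ ≤ B := by rw [← h3]; exact h2
  -- continuity
  have hcont : ContinuousOn f (Set.Icc T₁ T₂) := by
    have hne : ∀ x ∈ Set.Icc T₁ T₂, x ≠ 0 := fun x hx =>
      ne_of_gt (lt_of_lt_of_le hT₁ hx.1)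
    have harg : ∀ x ∈ Set.Icc T₁ T₂, (1 : ℝ) + c / x ≠ 0 := by
      intro x hx
      have hxpos : 0 < x := lt_of_lt_of_le hT₁ hx.1
      positivity
    have : f = fun T => T / 2 * W * (Real.log (1 + c / T) / Real.log 2) := by
      funext T; simp only [hf]; rw [Real.logb]
    rw [this]
    exact ((continuousOn_id.div_const 2).mul continuousOn_const).mul
      (((continuousOn_const.add (continuousOn_const.div continuousOn_id hne)).log
        harg).div_const _)
  have hB' : B ∈ Set.Icc (f T₁) (f T₂) := ⟨hfT₁, hfT₂⟩
  obtain ⟨T, hTmem, hTeq⟩ := intermediate_value_Icc hT₁le hcont hB'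
  exact ⟨T, lt_of_lt_of_le hT₁ hTmem.1, hTeq⟩

theorem stmt_5 (W β E H α B : ℝ)
    (hW : 0 < W) (hβ : 0 < β) (hE : 0 < E) (hH : 0 < H) (hα : 2 ≤ α) (hB : 0 < B) :
    (B < W * β * E / (2 * H ^ α * Real.log 2) →
      ∃ T : ℝ, 0 < T ∧ (T / 2) * W * Real.logb 2 (1 + β * E / (T * H ^ α)) = B) ∧
    (W * β * E / (2 * H ^ α * Real.log 2) ≤ B →
      ∀ T : ℝ, 0 < T → ¬ (B ≤ (T / 2) * W * Real.logb 2 (1 + β * E / (T * H ^ α)))) := by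
  have hHα : 0 < H ^ α := Real.rpow_pos_of_pos hH α
  set c : ℝ := β * E / H ^ α with hcdef
  have hc : 0 < c := by positivity
  have heq : ∀ T : ℝ, β * E / (T * H ^ α) = c / T := by
    intro T
    rw [hcdef, div_div, mul_comm (H ^ α) T]
  have heq2 : W * β * E / (2 * H ^ α * Real.log 2) = W * c / (2 * Real.log 2) := by
    have hl2 : Real.log 2 ≠ 0 := ne_of_gt (Real.log_pos (by norm_num))
    rw [hcdef]
    field_simp
  obtain ⟨h1, h2⟩ := aux_hover W c B hW hc hB
  constructor
  · intro hBL
    obtain ⟨T, hT, hTeq⟩ := h1 (heq2 ▸ hBL)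
    exact ⟨T, hT, by rw [heq T]; exact hTeq⟩
  · intro hLB T hT hle
    exact h2 (heq2 ▸ hLB) T hT (by rw [← heq T]; exact hle)
end

section
/- Let a₁ > 0, a₂ > 0, a₃ ∈ ℝ, E > 0, and suppose a₁·log₂(a₂/a₁) - a₃ ≥ 0. Then the function g(u) = u·(a₁·log₂((E/u + a₂)/a₁) - a₃) is strictly increasing on (0, ∞). -/
open Real

lemma log_key_13 {t : ℝ} (ht : 0 < t) : t / (1 + t) < Real.log (1 + t) := by
  have h1 : (0:ℝ) < 1 + t := by linarith
  have h2 := Real.log_lt_sub_one_of_pos (x := (1+t)⁻¹) (by positivity)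
    (by
      intro hc
      have : (1:ℝ) + t = 1 := by
        have := congrArg (fun x => x⁻¹) hc
        simpa using this
      linarith)
  rw [Real.log_inv] at h2
  have h3 : (1+t)⁻¹ - 1 = -(t/(1+t)) := by field_simp; ring
  rw [h3] at h2
  linarith

lemma hasDeriv_13 (a₁ a₂ a₃ E : ℝ) (ha₁ : 0 < a₁) (ha₂ : 0 < a₂) (hE : 0 < E)
    {u : ℝ} (hu : 0 < u) :
    HasDerivAt (fun u : ℝ => u * (a₁ * Real.logb 2 ((E / u + a₂) / a₁) - a₃))
      ((a₁ * Real.logb 2 ((E/u + a₂)/a₁) - a₃)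
        + u * (a₁ * (E * -(u^2)⁻¹ / a₁ / ((E/u + a₂)/a₁) / Real.log 2))) u := by
  have hu0 : u ≠ 0 := ne_of_gt hu
  have hpos : 0 < E/u + a₂ := by positivity
  have h1 : HasDerivAt (fun u : ℝ => (E/u + a₂)/a₁) (E * -(u^2)⁻¹ / a₁) u := by
    have := (((hasDerivAt_inv hu0).const_mul E).add_const a₂).div_const a₁
    simpa [div_eq_mul_inv] using this
  have h2 : HasDerivAt (fun u : ℝ => Real.log ((E/u + a₂)/a₁))
      (E * -(u^2)⁻¹ / a₁ / ((E/u + a₂)/a₁)) u := h1.log (by positivity)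
  have h3 := ((h2.div_const (Real.log 2)).const_mul a₁).sub_const a₃
  have h4 := (hasDerivAt_id u).mul h3
  simp only [Real.logb]
  exact h4.congr_deriv (by simp only [id_eq]; ring)

theorem stmt_13 (a₁ a₂ a₃ E : ℝ) (ha₁ : 0 < a₁) (ha₂ : 0 < a₂) (hE : 0 < E)
    (h : 0 ≤ a₁ * Real.logb 2 (a₂ / a₁) - a₃) :
    StrictMonoOn (fun u : ℝ => u * (a₁ * Real.logb 2 ((E / u + a₂) / a₁) - a₃))
      (Set.Ioi 0) := by
  have hlog2 : (0:ℝ) < Real.log 2 := Real.log_pos one_lt_two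
  apply strictMonoOn_of_deriv_pos (convex_Ioi 0)
  · intro u hu
    exact (hasDeriv_13 a₁ a₂ a₃ E ha₁ ha₂ hE hu).differentiableAt.continuousAt.continuousWithinAt
  · rw [interior_Ioi]
    intro u hu
    have hupos : (0:ℝ) < u := hu
    rw [(hasDeriv_13 a₁ a₂ a₃ E ha₁ ha₂ hE hupos).deriv]
    have hu0 : u ≠ 0 := ne_of_gt hupos
    have ha₁0 : a₁ ≠ 0 := ne_of_gt ha₁
    have ha₂0 : a₂ ≠ 0 := ne_of_gt ha₂
    have hEu : (0:ℝ) < E/u + a₂ := by positivity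
    have hEu0 : E/u + a₂ ≠ 0 := ne_of_gt hEu
    have hl2 : Real.log 2 ≠ 0 := ne_of_gt hlog2
    set t := E / (a₂ * u) with ht_def
    have ht : 0 < t := by positivity
    have h1t : (0:ℝ) < 1 + t := by linarith
    have h1t0 : (1:ℝ) + t ≠ 0 := ne_of_gt h1t
    have hsplit : Real.log ((E/u + a₂)/a₁) = Real.log (a₂/a₁) + Real.log (1 + t) := by
      rw [← Real.log_mul (by positivity) (by positivity)]
      congr 1
      rw [ht_def]
      field_simp
      ring
    have hterm : u * (a₁ * (E * -(u^2)⁻¹ / a₁ / ((E/u + a₂)/a₁) / Real.log 2))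
        = -((a₁ / Real.log 2) * (t / (1 + t))) := by
      rw [ht_def]
      field_simp
      ring
    rw [hterm]
    have heq : (a₁ * Real.logb 2 ((E/u + a₂)/a₁) - a₃)
        + -((a₁ / Real.log 2) * (t / (1 + t)))
        = (a₁ * Real.logb 2 (a₂/a₁) - a₃)
          + (a₁ / Real.log 2) * (Real.log (1 + t) - t / (1 + t)) := by
      simp only [Real.logb, hsplit]
      ring
    rw [heq]
    have hk := log_key_13 ht
    have hpos2 : 0 < (a₁ / Real.log 2) * (Real.log (1 + t) - t / (1 + t)) := by
      apply mul_pos (by positivity)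
      linarith
    linarith
end
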